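/- Let a > 0 and define s : ℝ → ℝ by s(x) = (1/a)·log(1 + a·|x|) − |x|. Then s is twice continuously differentiable on all of ℝ with s′(x) = −a·x/(1 + a·|x|) and s″(x) = −a/(1 + a·|x|)² for all x ∈ ℝ; in particular s is concave and −a ≤ s″(x) ≤ 0 for all x ∈ ℝ. -/

import Mathlib

open Real Filter Asymptotics Topology

private lemma lp_pos (a : ℝ) (ha : 0 < a) (x : ℝ) : 0 < 1 + a * |x| := by positivity

/-- |s(x)| ≤ a x² -/
private lemma lp_bound (a : ℝ) (ha : 0 < a) (x : ℝ) :
    abs ((1 / a) * Real.log (1 + a * |x|) - |x|) ≤ a * x ^ 2 := by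
  have h0 : (0:ℝ) < 1 + a * |x| := lp_pos a ha x
  have hub : Real.log (1 + a * |x|) ≤ a * |x| := by
    have := Real.log_le_sub_one_of_pos h0
    linarith
  have hlb : a * |x| - (a * |x|) ^ 2 ≤ Real.log (1 + a * |x|) := by
    have h1 := Real.one_sub_inv_le_log_of_pos h0
    have h2 : 1 - (1 + a * |x|)⁻¹ = a * |x| / (1 + a * |x|) := by
      field_simp
      ring
    rw [h2] at h1
    have h3 : a * |x| - (a * |x|) ^ 2 ≤ a * |x| / (1 + a * |x|) := by
      rw [le_div_iff₀ h0]
      have hu : 0 ≤ a * |x| := by positivity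
      nlinarith [pow_nonneg hu 3]
    linarith
  rw [abs_le]
  constructor
  · have : (1 / a) * (a * |x| - (a * |x|) ^ 2) ≤ (1 / a) * Real.log (1 + a * |x|) :=
      mul_le_mul_of_nonneg_left hlb (by positivity)
    have he : (1 / a) * (a * |x| - (a * |x|) ^ 2) = |x| - a * x ^ 2 := by
      field_simp
      rw [← sq_abs x]
      ring
    nlinarith
  · have : (1 / a) * Real.log (1 + a * |x|) ≤ (1 / a) * (a * |x|) :=
      mul_le_mul_of_nonneg_left hub (by positivity)
    have he : (1 / a) * (a * |x|) = |x| := by field_simp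
    nlinarith [sq_nonneg x, abs_nonneg x]

private lemma lp_hasDerivAt (a : ℝ) (ha : 0 < a) (x : ℝ) :
    HasDerivAt (fun x : ℝ => (1 / a) * Real.log (1 + a * |x|) - |x|)
      (-a * x / (1 + a * |x|)) x := by
  rcases eq_or_ne x 0 with rfl | hx
  · have h0 : (-a * (0:ℝ) / (1 + a * |(0:ℝ)|)) = 0 := by simp
    rw [h0, hasDerivAt_iff_isLittleO]
    simp only [sub_zero, abs_zero, mul_zero, add_zero, Real.log_one, smul_zero]
    have hO : (fun h : ℝ => (1 / a) * Real.log (1 + a * |h|) - |h|)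
        =O[𝓝 0] fun h : ℝ => h ^ 2 := by
      refine isBigO_of_le' (c := a) _ fun h => ?_
      simp only [Real.norm_eq_abs]
      rw [abs_of_nonneg (sq_nonneg h)]
      exact lp_bound a ha h
    exact hO.trans_isLittleO (isLittleO_pow_id one_lt_two)
  · have habs : HasDerivAt (fun y : ℝ => |y|) (SignType.sign x : ℝ) x := hasDerivAt_abs hx
    have h1 : HasDerivAt (fun y : ℝ => 1 + a * |y|) (a * (SignType.sign x : ℝ)) x :=
      (habs.const_mul a).const_add 1
    have hlog := h1.log (ne_of_gt (lp_pos a ha x))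
    have hfin := (hlog.const_mul (1 / a)).sub habs
    refine hfin.congr_deriv (Eq.symm ?_)
    have hne := ne_of_gt (lp_pos a ha x)
    rcases hx.lt_or_gt with hlt | hlt
    · have hne' : (1:ℝ) - a * x ≠ 0 := by nlinarith [mul_neg_of_pos_of_neg ha hlt]
      rw [sign_neg hlt, abs_of_neg hlt]
      push_cast [SignType.coe_one]
      rw [show a * -x = -(a*x) by ring, ← sub_eq_add_neg]
      field_simp
      ring
    · have hne' : (1:ℝ) + a * x ≠ 0 := by nlinarith [mul_pos ha hlt]
      rw [sign_pos hlt, abs_of_pos hlt]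
      push_cast [SignType.coe_one]
      field_simp
      try ring

private lemma lp_hasDerivAt2 (a : ℝ) (ha : 0 < a) (x : ℝ) :
    HasDerivAt (fun x : ℝ => -a * x / (1 + a * |x|)) (-a / (1 + a * |x|) ^ 2) x := by
  rcases eq_or_ne x 0 with rfl | hx
  · rw [hasDerivAt_iff_tendsto_slope]
    have heq : ∀ h : ℝ, h ≠ 0 →
        slope (fun x : ℝ => -a * x / (1 + a * |x|)) 0 h = -a / (1 + a * |h|) := by
      intro h hh
      have hne := ne_of_gt (lp_pos a ha h)
      rw [slope_def_field]
      field_simp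
      ring
    have hcont : Tendsto (fun h : ℝ => -a / (1 + a * |h|)) (𝓝 0) (𝓝 (-a / (1 + a * |(0:ℝ)|))) := by
      apply Tendsto.div tendsto_const_nhds
      · exact (tendsto_const_nhds.add ((continuous_abs.tendsto 0).const_mul a))
      · exact ne_of_gt (lp_pos a ha 0)
    have : Tendsto (fun h : ℝ => -a / (1 + a * |h|)) (𝓝[≠] 0) (𝓝 (-a / (1 + a * |(0:ℝ)|))) :=
      hcont.mono_left nhdsWithin_le_nhds
    have hval : -a / (1 + a * |(0:ℝ)|) ^ 2 = -a / (1 + a * |(0:ℝ)|) := by simp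
    rw [hval]
    refine this.congr' ?_
    filter_upwards [self_mem_nhdsWithin] with h hh
    exact (heq h hh).symm
  · have habs : HasDerivAt (fun y : ℝ => |y|) (SignType.sign x : ℝ) x := hasDerivAt_abs hx
    have hden : HasDerivAt (fun y : ℝ => 1 + a * |y|) (a * (SignType.sign x : ℝ)) x :=
      (habs.const_mul a).const_add 1
    have hnum : HasDerivAt (fun y : ℝ => -a * y) (-a) x := by
      simpa using (hasDerivAt_id x).const_mul (-a)
    have hne := ne_of_gt (lp_pos a ha x)
    have hfin := hnum.div hden hne
    refine hfin.congr_deriv (Eq.symm ?_)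
    rcases hx.lt_or_gt with hlt | hlt
    · rw [sign_neg hlt]
      rw [abs_of_neg hlt]
      push_cast [SignType.coe_one]
      field_simp
      ring
    · rw [sign_pos hlt]
      rw [abs_of_pos hlt]
      push_cast [SignType.coe_one]
      field_simp
      ring

theorem log_penalty_sub_abs_derivs (a : ℝ) (ha : 0 < a) :
    ContDiff ℝ 2 (fun x : ℝ => (1 / a) * Real.log (1 + a * |x|) - |x|) ∧
    (∀ x : ℝ, HasDerivAt (fun x : ℝ => (1 / a) * Real.log (1 + a * |x|) - |x|)
      (-a * x / (1 + a * |x|)) x) ∧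
    (∀ x : ℝ, HasDerivAt
      (deriv (fun x : ℝ => (1 / a) * Real.log (1 + a * |x|) - |x|))
      (-a / (1 + a * |x|) ^ 2) x) ∧
    ConcaveOn ℝ Set.univ (fun x : ℝ => (1 / a) * Real.log (1 + a * |x|) - |x|) ∧
    (∀ x : ℝ,
      -a ≤ deriv (deriv (fun x : ℝ => (1 / a) * Real.log (1 + a * |x|) - |x|)) x ∧
      deriv (deriv (fun x : ℝ => (1 / a) * Real.log (1 + a * |x|) - |x|)) x ≤ 0) := by
  have hd1 := lp_hasDerivAt a ha
  have hd2' := lp_hasDerivAt2 a ha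
  have hds : deriv (fun x : ℝ => (1 / a) * Real.log (1 + a * |x|) - |x|)
      = fun x : ℝ => -a * x / (1 + a * |x|) := funext fun x => (hd1 x).deriv
  have hd2 : ∀ x : ℝ, HasDerivAt
      (deriv (fun x : ℝ => (1 / a) * Real.log (1 + a * |x|) - |x|))
      (-a / (1 + a * |x|) ^ 2) x := by
    intro x; rw [hds]; exact hd2' x
  have hdds : deriv (deriv (fun x : ℝ => (1 / a) * Real.log (1 + a * |x|) - |x|))
      = fun x : ℝ => -a / (1 + a * |x|) ^ 2 := funext fun x => (hd2 x).deriv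
  refine ⟨?_, hd1, hd2, ?_, ?_⟩
  · rw [show (2 : WithTop ℕ∞) = 1 + 1 from rfl, contDiff_succ_iff_deriv]
    refine ⟨fun x => (hd1 x).differentiableAt, by simp, ?_⟩
    rw [contDiff_one_iff_deriv]
    refine ⟨fun x => (hd2 x).differentiableAt, ?_⟩
    rw [hdds]
    apply Continuous.div continuous_const
    · exact ((continuous_const.add (continuous_const.mul continuous_abs)).pow 2)
    · intro x
      exact pow_ne_zero 2 (ne_of_gt (lp_pos a ha x))
  · refine concaveOn_of_hasDerivWithinAt2_nonpos convex_univ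
      (f' := fun x : ℝ => -a * x / (1 + a * |x|))
      (f'' := fun x : ℝ => -a / (1 + a * |x|) ^ 2)
      (fun x _ => (hd1 x).continuousAt.continuousWithinAt)
      (fun x _ => (hd1 x).hasDerivWithinAt)
      (fun x _ => (hd2' x).hasDerivWithinAt)
      (fun x _ => ?_)
    have := lp_pos a ha x
    apply div_nonpos_of_nonpos_of_nonneg (by linarith) (by positivity)
  · intro x
    have hval : deriv (deriv (fun x : ℝ => (1 / a) * Real.log (1 + a * |x|) - |x|)) x
        = -a / (1 + a * |x|) ^ 2 := (hd2 x).deriv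
    rw [hval]
    have h0 : (0:ℝ) < 1 + a * |x| := lp_pos a ha x
    have h1 : (1:ℝ) ≤ (1 + a * |x|) ^ 2 := by nlinarith [abs_nonneg x, mul_nonneg ha.le (abs_nonneg x), sq_nonneg (a * |x|)]
    constructor
    · rw [neg_div]
      exact neg_le_neg (div_le_self ha.le h1)
    · apply div_nonpos_of_nonpos_of_nonneg (by linarith) (by positivity)
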